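/- Let G be a connected undirected graph on vertex set V and let p, q : V → R^2 be configurations with p_i ≠ p_j and q_i ≠ q_j for all edges (i,j). If for every edge (i,j) of G there exists θ_ij ∈ [0,2π) with unit bearing b_ij(q) = R(θ_ij) b_ij(p), and for every pair of adjacent edges (j,i), (j,k) the signed angle from b_ji(q) to b_jk(q) equals the signed angle from b_ji(p) to b_jk(p), then there exists a single θ ∈ [0,2π) such that b_ij(q) = R(θ) b_ij(p) for every edge (i,j). -/

import Mathlib

open Matrix Real

noncomputable def Rot (θ : ℝ) : Matrix (Fin 2) (Fin 2) ℝ :=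
  !![Real.cos θ, -Real.sin θ; Real.sin θ, Real.cos θ]

noncomputable def Proj (b : Fin 2 → ℝ) : Matrix (Fin 2) (Fin 2) ℝ :=
  1 - Matrix.vecMulVec b b

noncomputable def unitize (x : Fin 2 → ℝ) : Fin 2 → ℝ :=
  (Real.sqrt (x ⬝ᵥ x))⁻¹ • x

noncomputable def signedAngle (a b : Fin 2 → ℝ) : ℝ :=
  if 0 ≤ b ⬝ᵥ (Rot (π/2) *ᵥ a) then Real.arccos (b ⬝ᵥ a)
  else 2*π - Real.arccos (b ⬝ᵥ a)

lemma dot_two (u v : Fin 2 → ℝ) : u ⬝ᵥ v = u 0 * v 0 + u 1 * v 1 := by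
  simp [dotProduct, Fin.sum_univ_two]

lemma rot_mulVec (θ : ℝ) (v : Fin 2 → ℝ) :
    Rot θ *ᵥ v = ![Real.cos θ * v 0 - Real.sin θ * v 1, Real.sin θ * v 0 + Real.cos θ * v 1] := by
  funext i
  fin_cases i <;>
    simp [Rot, Matrix.mulVec, dotProduct, Fin.sum_univ_two] <;> ring

lemma rot_rot (θ φ : ℝ) (v : Fin 2 → ℝ) : Rot θ *ᵥ (Rot φ *ᵥ v) = Rot (θ + φ) *ᵥ v := by
  simp only [rot_mulVec]
  funext i; fin_cases i <;>
    simp [rot_mulVec, Real.cos_add, Real.sin_add] <;> ring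

lemma rot_unit (θ : ℝ) {v : Fin 2 → ℝ} (hv : v ⬝ᵥ v = 1) :
    (Rot θ *ᵥ v) ⬝ᵥ (Rot θ *ᵥ v) = 1 := by
  have hc := Real.sin_sq_add_cos_sq θ
  rw [dot_two] at hv ⊢
  simp only [rot_mulVec, Matrix.cons_val_zero, Matrix.cons_val_one, Matrix.head_cons]
  nlinarith [hv, hc]

lemma unitize_unit {v : Fin 2 → ℝ} (hv : v ≠ 0) : unitize v ⬝ᵥ unitize v = 1 := by
  have h0 : v 0 ≠ 0 ∨ v 1 ≠ 0 := by
    by_contra h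
    push_neg at h
    apply hv
    funext i; fin_cases i <;> simp [h.1, h.2]
  have hd : 0 < v ⬝ᵥ v := by
    rw [dot_two]
    rcases h0 with h | h <;>
      nlinarith [mul_self_nonneg (v 0), mul_self_nonneg (v 1), mul_self_pos.mpr h]
  have hs : Real.sqrt (v ⬝ᵥ v) ≠ 0 := by positivity
  have hr : Real.sqrt (v ⬝ᵥ v) * Real.sqrt (v ⬝ᵥ v) = v ⬝ᵥ v := Real.mul_self_sqrt hd.le
  rw [dot_two] at hr
  rw [dot_two] at hs hd
  simp only [unitize, dot_two, Pi.smul_apply, smul_eq_mul]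
  field_simp
  rw [Real.sq_sqrt (by positivity), div_self (ne_of_gt (by nlinarith))]

lemma unitize_neg (v : Fin 2 → ℝ) : unitize (-v) = - unitize v := by
  have h : (-v) ⬝ᵥ (-v) = v ⬝ᵥ v := by simp [dot_two]
  simp [unitize, h]

lemma signedAngle_spec {a b : Fin 2 → ℝ} (ha : a ⬝ᵥ a = 1) (hb : b ⬝ᵥ b = 1) :
    b = Rot (signedAngle a b) *ᵥ a := by
  have hrotpi : Rot (π/2) *ᵥ a = ![-(a 1), a 0] := by
    rw [rot_mulVec]
    simp [Real.cos_pi_div_two, Real.sin_pi_div_two]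
  set c := b ⬝ᵥ a with hc
  set s := b ⬝ᵥ (Rot (π/2) *ᵥ a) with hs
  have hcv : c = b 0 * a 0 + b 1 * a 1 := by rw [hc, dot_two]
  have hsv : s = -(b 0 * a 1) + b 1 * a 0 := by
    rw [hs, hrotpi, dot_two]; simp
  rw [dot_two] at ha hb
  have hcs : c^2 + s^2 = 1 := by rw [hcv, hsv]; nlinarith [ha, hb]
  have hc1 : -1 ≤ c := by nlinarith [sq_nonneg s]
  have hc2 : c ≤ 1 := by nlinarith [sq_nonneg s]
  have hb0 : b 0 = c * a 0 - s * a 1 := by rw [hcv, hsv]; linear_combination (-(b 0)) * ha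
  have hb1 : b 1 = s * a 0 + c * a 1 := by rw [hcv, hsv]; linear_combination (-(b 1)) * ha
  have hsin : Real.sin (Real.arccos c) = Real.sqrt (1 - c^2) := Real.sin_arccos c
  have hcos : Real.cos (Real.arccos c) = c := Real.cos_arccos hc1 hc2
  unfold signedAngle
  rw [← hc, ← hs]
  by_cases hpos : 0 ≤ s
  · rw [if_pos hpos]
    have : Real.sin (Real.arccos c) = s := by
      rw [hsin]
      have : (1 : ℝ) - c^2 = s^2 := by linarith
      rw [this, Real.sqrt_sq hpos]
    simp only [rot_mulVec]
    funext i
    fin_cases i <;> simp [rot_mulVec, hcos, this, hb0, hb1] <;> ring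
  · rw [if_neg hpos]
    push_neg at hpos
    have hcc : Real.cos (2*π - Real.arccos c) = c := by
      rw [Real.cos_sub, Real.cos_two_pi, Real.sin_two_pi, hcos]; ring
    have hss : Real.sin (2*π - Real.arccos c) = s := by
      rw [Real.sin_sub, Real.cos_two_pi, Real.sin_two_pi, hsin]
      have h1 : (1 : ℝ) - c^2 = s^2 := by linarith
      rw [h1, Real.sqrt_sq_eq_abs, abs_of_neg hpos]; ring
    simp only [rot_mulVec]
    funext i
    fin_cases i <;> simp [rot_mulVec, hcc, hss, hb0, hb1] <;> ring

lemma rot_inj {θ φ : ℝ} (hθ : θ ∈ Set.Ico (0:ℝ) (2*π)) (hφ : φ ∈ Set.Ico (0:ℝ) (2*π))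
    {v : Fin 2 → ℝ} (hv : v ⬝ᵥ v = 1) (h : Rot θ *ᵥ v = Rot φ *ᵥ v) : θ = φ := by
  rw [dot_two] at hv
  have h0 := congrFun h 0
  have h1 := congrFun h 1
  simp only [rot_mulVec, Matrix.cons_val_zero, Matrix.cons_val_one, Matrix.head_cons] at h0 h1
  have hc : Real.cos θ = Real.cos φ := by
    linear_combination (v 0) * h0 + (v 1) * h1 - (Real.cos θ - Real.cos φ) * hv
  have hs : Real.sin θ = Real.sin φ := by
    linear_combination (v 0) * h1 - (v 1) * h0 - (Real.sin θ - Real.sin φ) * hv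
  have hang := Real.Angle.cos_sin_inj hc hs
  rw [Real.Angle.angle_eq_iff_two_pi_dvd_sub] at hang
  obtain ⟨k, hk⟩ := hang
  have hπ := Real.pi_pos
  have hk0 : k = 0 := by
    by_contra hne
    have h1le : (1:ℝ) ≤ |(k:ℝ)| := by exact_mod_cast Int.one_le_abs hne
    have habs : |θ - φ| < 2*π := abs_lt.mpr ⟨by linarith [hθ.1, hθ.2, hφ.1, hφ.2],
      by linarith [hθ.1, hθ.2, hφ.1, hφ.2]⟩
    rw [hk, abs_mul] at habs
    have : |2*π| = 2*π := abs_of_pos (by linarith)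
    rw [this] at habs
    nlinarith
  rw [hk0] at hk
  simp at hk
  linarith

lemma key_angle {a b a' b' : Fin 2 → ℝ} {θ₁ θ₂ : ℝ}
    (ha : a ⬝ᵥ a = 1) (hb : b ⬝ᵥ b = 1)
    (h1 : a' = Rot θ₁ *ᵥ a) (h2 : b' = Rot θ₂ *ᵥ b)
    (hθ₁ : θ₁ ∈ Set.Ico (0:ℝ) (2*π)) (hθ₂ : θ₂ ∈ Set.Ico (0:ℝ) (2*π))
    (hang : signedAngle a' b' = signedAngle a b) : θ₁ = θ₂ := by
  have ha' : a' ⬝ᵥ a' = 1 := by rw [h1]; exact rot_unit θ₁ ha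
  have hb' : b' ⬝ᵥ b' = 1 := by rw [h2]; exact rot_unit θ₂ hb
  have e1 := signedAngle_spec ha hb
  have e2 := signedAngle_spec ha' hb'
  rw [hang] at e2
  set α := signedAngle a b with hα
  have : Rot θ₂ *ᵥ b = Rot θ₁ *ᵥ b := by
    calc Rot θ₂ *ᵥ b = b' := h2.symm
    _ = Rot α *ᵥ a' := e2
    _ = Rot α *ᵥ (Rot θ₁ *ᵥ a) := by rw [h1]
    _ = Rot (α + θ₁) *ᵥ a := rot_rot α θ₁ a
    _ = Rot (θ₁ + α) *ᵥ a := by rw [add_comm]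
    _ = Rot θ₁ *ᵥ (Rot α *ᵥ a) := (rot_rot θ₁ α a).symm
    _ = Rot θ₁ *ᵥ b := by rw [← e1]
  exact (rot_inj hθ₂ hθ₁ hb this).symm

lemma unitize_sub_unit {x y : Fin 2 → ℝ} (h : x ≠ y) :
    unitize (x - y) ⬝ᵥ unitize (x - y) = 1 :=
  unitize_unit (sub_ne_zero_of_ne h)

lemma rot_flip {θ : ℝ} {x y x' y' : Fin 2 → ℝ}
    (h : unitize (y - x) = Rot θ *ᵥ unitize (x' - y')) :
    unitize (x - y) = Rot θ *ᵥ unitize (y' - x') := by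
  have e1 : x - y = -(y - x) := by ring
  have e2 : y' - x' = -(x' - y') := by ring
  rw [e1, e2, unitize_neg, unitize_neg, h, Matrix.mulVec_neg]

theorem connected_graph_common_rotation {V : Type*} (G : SimpleGraph V) (hG : G.Connected)
    (p q : V → Fin 2 → ℝ)
    (hp : ∀ i j, G.Adj i j → p i ≠ p j) (hq : ∀ i j, G.Adj i j → q i ≠ q j)
    (hrot : ∀ i j, G.Adj i j → ∃ θ ∈ Set.Ico (0:ℝ) (2*π),
      unitize (q j - q i) = Rot θ *ᵥ unitize (p j - p i))
    (hang : ∀ i j k, G.Adj j i → G.Adj j k →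
      signedAngle (unitize (q i - q j)) (unitize (q k - q j)) =
      signedAngle (unitize (p i - p j)) (unitize (p k - p j))) :
    ∃ θ ∈ Set.Ico (0:ℝ) (2*π), ∀ i j, G.Adj i j →
      unitize (q j - q i) = Rot θ *ᵥ unitize (p j - p i) := by
  classical
  by_cases hE : ∃ i j, G.Adj i j
  · obtain ⟨i0, j0, h0⟩ := hE
    obtain ⟨θ, hθ, hbase⟩ := hrot i0 j0 h0
    refine ⟨θ, hθ, ?_⟩
    -- P v : every edge out of v carries rotation θ
    let P : V → Prop := fun v => ∀ w, G.Adj v w →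
      unitize (q w - q v) = Rot θ *ᵥ unitize (p w - p v)
    -- at a vertex, one edge with rotation θ forces all edges to have rotation θ
    have vertex : ∀ (j i : V), G.Adj j i →
        unitize (q i - q j) = Rot θ *ᵥ unitize (p i - p j) → P j := by
      intro j i hji hedge w hw
      obtain ⟨θ', hθ', h'⟩ := hrot j w hw
      have hunit_a : unitize (p i - p j) ⬝ᵥ unitize (p i - p j) = 1 :=
        unitize_sub_unit (hp j i hji).symm
      have hunit_b : unitize (p w - p j) ⬝ᵥ unitize (p w - p j) = 1 :=
        unitize_sub_unit (hp j w hw).symm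
      have := key_angle hunit_a hunit_b hedge h' hθ hθ' (hang i j w hji hw)
      rw [h', ← this]
    have basei0 : P i0 := vertex i0 j0 h0 hbase
    have step : ∀ v w, G.Adj v w → P v → P w := by
      intro v w hvw hPv
      have hedge : unitize (q w - q v) = Rot θ *ᵥ unitize (p w - p v) := hPv w hvw
      exact vertex w v hvw.symm (rot_flip hedge)
    have walk : ∀ {u v : V} (_ : G.Walk u v), P u → P v := by
      intro u v wk
      induction wk with
      | nil => exact id
      | cons h _ ih => exact fun hp => ih (step _ _ h hp)
    have all : ∀ v, P v := fun v => (hG.preconnected i0 v).elim fun wk => walk wk basei0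
    intro i j hij
    exact all i j hij
  · refine ⟨0, ⟨le_refl 0, by positivity⟩, ?_⟩
    intro i j hij
    exact absurd ⟨i, j, hij⟩ hE
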